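/- arXiv:2109.05306 — 2 statements merged into one kernel-verified Lean document; each statement's English description precedes it below -/
import Mathlib

section
/- For the complete graph K_n with n ≥ 1 and any two distinct vertices a, b and any real t, the magnitude of the (b,a) entry of the Laplacian transition matrix satisfies |e_b^T exp(-itL) e_a| ≤ 2/n, where L = nI - J. Consequently, K_n with n ≥ 3 admits no Laplacian perfect state transfer between any pair of distinct vertices. -/
open Matrix Complex
set_option maxHeartbeats 1000000 in

lemma exp_smul_idem {m : Type*} [Fintype m] [DecidableEq m] (x : ℂ)
    (P : Matrix m m ℂ) (hP : P * P = P) :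
    NormedSpace.exp (x • P) = 1 + (Complex.exp x - 1) • P := by
  letI : SeminormedRing (Matrix m m ℂ) := Matrix.linftyOpSemiNormedRing
  letI : NormedRing (Matrix m m ℂ) := Matrix.linftyOpNormedRing
  letI : NormedAlgebra ℂ (Matrix m m ℂ) := Matrix.linftyOpNormedAlgebra
  have hPn : ∀ k : ℕ, P ^ (k + 1) = P := by
    intro k; induction k with
    | zero => simp [pow_succ]
    | succ k ih => rw [pow_succ, ih, hP]
  have hsum : Summable fun n : ℕ => ((n.factorial : ℂ)⁻¹) • (x • P) ^ n :=
    NormedSpace.expSeries_summable' (x • P)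
  have hsumC : Summable fun n : ℕ => ((n.factorial : ℂ)⁻¹) • x ^ n :=
    NormedSpace.expSeries_summable' x
  have hsumC' : Summable fun n : ℕ => (((n + 1).factorial : ℂ)⁻¹) • x ^ (n + 1) :=
    (summable_nat_add_iff 1).2 hsumC
  have hexpC : Complex.exp x = 1 + ∑' n : ℕ, (((n + 1).factorial : ℂ)⁻¹) • x ^ (n + 1) := by
    rw [Complex.exp_eq_exp_ℂ, NormedSpace.exp_eq_tsum (𝕂 := ℂ)]
    beta_reduce
    rw [Summable.tsum_eq_zero_add hsumC]
    simp
  rw [NormedSpace.exp_eq_tsum (𝕂 := ℂ)]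
  beta_reduce
  rw [Summable.tsum_eq_zero_add hsum]
  have h1 : ((0:ℕ).factorial : ℂ)⁻¹ • (x • P) ^ 0 = (1 : Matrix m m ℂ) := by simp
  rw [h1]
  congr 1
  calc ∑' n : ℕ, (((n+1).factorial : ℂ)⁻¹) • (x • P) ^ (n+1)
      = ∑' n : ℕ, ((((n+1).factorial : ℂ)⁻¹) • x ^ (n+1)) • P := by
        refine tsum_congr fun k => ?_
        rw [smul_pow, hPn, smul_smul, mul_smul]
        exact (smul_assoc _ _ _).symm
    _ = (∑' n : ℕ, (((n+1).factorial : ℂ)⁻¹) • x ^ (n+1)) • P := hsumC'.tsum_smul_const P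
    _ = (Complex.exp x - 1) • P := by rw [hexpC]; congr 1; ring

/-- For `K_n` (`n ≥ 1`) with Laplacian `L = nI - J` and distinct vertices
`a, b`, `|e_bᵀ exp(-itL) e_a| ≤ 2/n` for all `t`; consequently for `n ≥ 3`
there is no Laplacian perfect state transfer between distinct vertices. -/
theorem complete_graph_no_pst {n : ℕ} (hn : 1 ≤ n) :
    let L : Matrix (Fin n) (Fin n) ℂ :=
      (n : ℂ) • 1 - Matrix.of fun _ _ => (1 : ℂ)
    (∀ (a b : Fin n), a ≠ b → ∀ t : ℝ,
      ‖NormedSpace.exp ((-(I * t)) • L) b a‖ ≤ 2 / n) ∧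
    (3 ≤ n → ∀ (a b : Fin n), a ≠ b → ∀ (t : ℝ) (γ : ℂ), ‖γ‖ = 1 →
      NormedSpace.exp ((-(I * t)) • L) *ᵥ Pi.single a 1 ≠ γ • (Pi.single b 1 : Fin n → ℂ)) := by
  intro L
  have hn0 : (n : ℂ) ≠ 0 := by exact_mod_cast Nat.pos_of_ne_zero (by omega) |>.ne'
  set J : Matrix (Fin n) (Fin n) ℂ := Matrix.of fun _ _ => (1 : ℂ) with hJdef
  set P : Matrix (Fin n) (Fin n) ℂ := (n : ℂ)⁻¹ • J with hPdef
  have hJJ : J * J = (n : ℂ) • J := by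
    ext i j
    simp [hJdef, Matrix.mul_apply]
  have hP : P * P = P := by
    rw [hPdef, Matrix.smul_mul, Matrix.mul_smul, hJJ, smul_smul, smul_smul]
    rw [mul_assoc, inv_mul_cancel₀ hn0, mul_one]
  have hJP : J = (n : ℂ) • P := by
    rw [hPdef, smul_smul, mul_inv_cancel₀ hn0, one_smul]
  have hPba : ∀ a b : Fin n, P b a = (n : ℂ)⁻¹ := by
    intro a b; simp [hPdef, hJdef]
  -- key exponential formula
  have key : ∀ t : ℝ,
      NormedSpace.exp ((-(I * t)) • L) =
        Complex.exp (-(I * t) * n) • (1 + (Complex.exp ((I * t) * n) - 1) • P) := by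
    intro t
    set x : ℂ := -(I * t) * n with hx
    have hsplit : (-(I * t)) • L = x • (1 : Matrix (Fin n) (Fin n) ℂ) + (-x) • P := by
      show (-(I * t)) • ((n : ℂ) • 1 - J) = _
      rw [hJP, smul_sub, smul_smul, smul_smul, hx, neg_smul, sub_eq_add_neg]
    have hcomm : Commute (x • (1 : Matrix (Fin n) (Fin n) ℂ)) ((-x) • P) :=
      ((Commute.one_left P).smul_left x).smul_right (-x)
    rw [hsplit, Matrix.exp_add_of_commute _ _ hcomm,
      exp_smul_idem x 1 (one_mul 1), exp_smul_idem (-x) P hP]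
    have h1 : (1 : Matrix (Fin n) (Fin n) ℂ) + (Complex.exp x - 1) • 1
        = Complex.exp x • 1 := by
      rw [sub_smul, one_smul]; abel
    rw [h1, Matrix.smul_mul, one_mul]
    congr 2
    rw [hx]; ring_nf
  have part1 : ∀ (a b : Fin n), a ≠ b → ∀ t : ℝ,
      ‖NormedSpace.exp ((-(I * t)) • L) b a‖ ≤ 2 / n := by
    intro a b hab t
    rw [key t]
    have hba : b ≠ a := hab.symm
    have hentry : (Complex.exp (-(I * t) * n) •
        (1 + (Complex.exp ((I * t) * n) - 1) • P)) b a
        = Complex.exp (-(I * t) * n) * ((Complex.exp ((I * t) * n) - 1) * (n : ℂ)⁻¹) := by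
      simp [Matrix.smul_apply, Matrix.add_apply, Matrix.one_apply_ne hba, hPba]
    rw [hentry]
    rw [norm_mul, norm_mul]
    have he1 : ‖Complex.exp (-(I * t) * n)‖ = 1 := by
      rw [Complex.norm_exp]; simp
    have he2 : ‖Complex.exp ((I * t) * n) - 1‖ ≤ 2 := by
      calc ‖Complex.exp ((I * t) * n) - 1‖
          ≤ ‖Complex.exp ((I * t) * n)‖ + ‖(1 : ℂ)‖ := by
            simpa using
              norm_sub_le (Complex.exp ((I * t) * n)) 1
        _ = 2 := by rw [Complex.norm_exp]; norm_num
    have he3 : ‖(n : ℂ)⁻¹‖ = (n : ℝ)⁻¹ := by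
      rw [norm_inv]; simp
    rw [he1, he3, one_mul, div_eq_mul_inv]
    have hnpos : (0:ℝ) < (n:ℝ)⁻¹ := by positivity
    exact mul_le_mul_of_nonneg_right he2 hnpos.le
  refine ⟨part1, ?_⟩
  intro h3 a b hab t γ hγ heq
  have hval : NormedSpace.exp ((-(I * t)) • L) b a = γ := by
    have := congrFun heq b
    rw [Matrix.mulVec_single] at this
    simpa using this
  have := part1 a b hab t
  rw [hval, hγ] at this
  have h2n : (2:ℝ) / n < 1 := by
    rw [div_lt_one (by positivity)]
    exact_mod_cast by omega
  linarith
end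

section
/- Let G be a graph whose Laplacian L has only integer eigenvalues, and let u, v be twin vertices of G (N(u)\{v} = N(v)\{u}). Form the weighted graph in which the weight of the edge {u,v} is set to 1/4 (i.e., L' = L + αM with M = (e_u - e_v)(e_u - e_v)^T, where α = 1/4 if u,v are non-adjacent and α = -3/4 if they are adjacent). Then exp(-2πiL') e_u = e_v: the perturbed graph has Laplacian perfect state transfer between u and v at time 2π. Moreover, exp(-2πiL') e_p = e_p for every vertex p ∉ {u,v}. -/
open Matrix Complex

lemma exp_mulVec_eigen {N : ℕ} (A : Matrix (Fin N) (Fin N) ℂ) (x : Fin N → ℂ) (μ : ℂ)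
    (h : A *ᵥ x = μ • x) : NormedSpace.exp A *ᵥ x = Complex.exp μ • x := by
  letI : SeminormedRing (Matrix (Fin N) (Fin N) ℂ) := Matrix.linftyOpSemiNormedRing
  letI : NormedRing (Matrix (Fin N) (Fin N) ℂ) := Matrix.linftyOpNormedRing
  letI : NormedAlgebra ℂ (Matrix (Fin N) (Fin N) ℂ) := Matrix.linftyOpNormedAlgebra
  have hpow : ∀ k : ℕ, A ^ k *ᵥ x = μ ^ k • x := by
    intro k
    induction k with
    | zero => simp
    | succ k ih =>
        rw [pow_succ, ← Matrix.mulVec_mulVec, h, Matrix.mulVec_smul, ih, pow_succ, smul_smul,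
          mul_comm]
  let f : Matrix (Fin N) (Fin N) ℂ →ₗ[ℂ] (Fin N → ℂ) :=
    { toFun := fun B => B *ᵥ x
      map_add' := fun B C => Matrix.add_mulVec B C x
      map_smul' := fun c B => Matrix.smul_mulVec c B x }
  have hs : Summable fun k : ℕ => ((k.factorial : ℂ)⁻¹) • A ^ k := NormedSpace.expSeries_summable' A
  have hμs : Summable fun k : ℕ => ((k.factorial : ℂ)⁻¹) * μ ^ k := by
    simpa [smul_eq_mul] using NormedSpace.expSeries_summable' (𝕂 := ℂ) μ
  calc NormedSpace.exp A *ᵥ x = f.toContinuousLinearMap (∑' k : ℕ, ((k.factorial : ℂ)⁻¹) • A ^ k) := by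
        rw [NormedSpace.exp_eq_tsum (𝕂 := ℂ)]; rfl
    _ = ∑' k : ℕ, (((k.factorial : ℂ)⁻¹) • A ^ k) *ᵥ x := f.toContinuousLinearMap.map_tsum hs
    _ = ∑' k : ℕ, (((k.factorial : ℂ)⁻¹) * μ ^ k) • x := by
        refine tsum_congr fun k => ?_
        rw [Matrix.smul_mulVec, hpow, smul_smul]
    _ = (∑' k : ℕ, ((k.factorial : ℂ)⁻¹) * μ ^ k) • x := hμs.tsum_smul_const x
    _ = Complex.exp μ • x := by
        congr 1
        rw [Complex.exp_eq_exp_ℂ, NormedSpace.exp_eq_tsum (𝕂 := ℂ)]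
        simp [smul_eq_mul]

lemma exp_smul_hermitian_int_eq_one {N : ℕ} (A : Matrix (Fin N) (Fin N) ℂ)
    (hA : A.IsHermitian) (h : ∀ i, ∃ k : ℤ, hA.eigenvalues i = (k : ℝ)) :
    NormedSpace.exp ((-(2 * Real.pi * I)) • A) = 1 := by
  set U : Matrix (Fin N) (Fin N) ℂ := (hA.eigenvectorUnitary : Matrix (Fin N) (Fin N) ℂ) with hU
  have hmem := hA.eigenvectorUnitary.2
  have hsu : star U * U = 1 := (Matrix.mem_unitaryGroup_iff'.mp hmem)
  have hus : U * star U = 1 := (Matrix.mem_unitaryGroup_iff.mp hmem)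
  have hUinv : U⁻¹ = star U := Matrix.inv_eq_left_inv hsu
  have hUunit : IsUnit U := ⟨⟨U, star U, hus, hsu⟩, rfl⟩
  set c : ℂ := -(2 * Real.pi * I) with hc
  set D : Matrix (Fin N) (Fin N) ℂ := diagonal (RCLike.ofReal ∘ hA.eigenvalues) with hD0
  have hkey : c • A = U * (c • D) * U⁻¹ := by
    rw [hUinv]
    conv_lhs => rw [hA.spectral_theorem]
    rw [mul_smul_comm, smul_mul_assoc]
    rw [Unitary.conjStarAlgAut_apply]
  rw [hkey, Matrix.exp_conj U _ hUunit]
  have hD : NormedSpace.exp (c • D) = 1 := by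
    rw [hD0]
    rw [← diagonal_smul, Matrix.exp_diagonal, Pi.exp_def]
    suffices hfun : (fun i => NormedSpace.exp ((c • (RCLike.ofReal ∘ hA.eigenvalues)) i)) =
        fun _ => (1 : ℂ) by rw [hfun, diagonal_one]
    funext i
    obtain ⟨k, hk⟩ := h i
    have h1 : (c • (RCLike.ofReal ∘ hA.eigenvalues)) i = ((-k : ℤ) : ℂ) * (2 * Real.pi * I) := by
      simp only [Pi.smul_apply, Function.comp_apply, hk, hc, smul_eq_mul]
      push_cast
      ring
    rw [h1, ← Complex.exp_eq_exp_ℂ, Complex.exp_int_mul_two_pi_mul_I]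
  rw [hD, mul_one, hUinv, hus]

lemma twin_degree_eq {n : ℕ} (G : SimpleGraph (Fin n)) [DecidableRel G.Adj] (u v : Fin n)
    (huv : u ≠ v) (htwin : ∀ c : Fin n, c ≠ u → c ≠ v → (G.Adj u c ↔ G.Adj v c)) :
    G.degree v = G.degree u := by
  unfold SimpleGraph.degree
  apply Finset.card_bij' (fun c _ => Equiv.swap u v c) (fun c _ => Equiv.swap u v c)
  · intro c hc
    rw [SimpleGraph.mem_neighborFinset] at hc ⊢
    by_cases hcu : c = u
    · subst hcu
      rw [Equiv.swap_apply_left]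
      exact G.adj_symm hc
    by_cases hcv : c = v
    · subst hcv
      exact absurd hc G.irrefl
    · rw [Equiv.swap_apply_of_ne_of_ne hcu hcv]
      exact (htwin c hcu hcv).mpr hc
  · intro c hc
    rw [SimpleGraph.mem_neighborFinset] at hc ⊢
    by_cases hcv : c = v
    · subst hcv
      rw [Equiv.swap_apply_right]
      exact G.adj_symm hc
    by_cases hcu : c = u
    · subst hcu
      exact absurd hc G.irrefl
    · rw [Equiv.swap_apply_of_ne_of_ne hcu hcv]
      exact (htwin c hcu hcv).mp hc
  · intro c _; exact Equiv.swap_apply_self _ _ _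
  · intro c _; exact Equiv.swap_apply_self _ _ _

lemma twin_lap_eigen {n : ℕ} (G : SimpleGraph (Fin n)) [DecidableRel G.Adj] (u v : Fin n)
    (huv : u ≠ v) (htwin : ∀ c : Fin n, c ≠ u → c ≠ v → (G.Adj u c ↔ G.Adj v c)) :
    G.lapMatrix ℝ *ᵥ (Pi.single u 1 - Pi.single v 1) =
      ((G.degree u : ℝ) + (if G.Adj u v then 1 else 0)) •
        (Pi.single u 1 - Pi.single v 1) := by
  funext c
  rw [SimpleGraph.lapMatrix_mulVec_apply]
  have hsum : ∑ x ∈ G.neighborFinset c, (Pi.single u 1 - Pi.single v 1 : Fin n → ℝ) x =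
      (if G.Adj c u then 1 else 0) - (if G.Adj c v then 1 else 0) := by
    simp only [Pi.sub_apply, Finset.sum_sub_distrib, Pi.single_apply,
      Finset.sum_ite_eq' (G.neighborFinset c), SimpleGraph.mem_neighborFinset]
  rw [hsum]
  by_cases hcu : c = u
  · subst hcu
    simp only [Pi.sub_apply, Pi.single_eq_same, Pi.single_eq_of_ne huv,
      Pi.smul_apply, smul_eq_mul]
    rw [if_neg G.irrefl]
    ring
  by_cases hcv : c = v
  · subst hcv
    simp only [Pi.sub_apply, Pi.single_eq_same, Pi.single_eq_of_ne (Ne.symm huv),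
      Pi.smul_apply, smul_eq_mul]
    rw [twin_degree_eq G u _ huv htwin]
    rw [if_congr (G.adj_comm c u) rfl rfl, if_neg G.irrefl]
    ring
  · have h1 : G.Adj c u ↔ G.Adj c v := by
      rw [G.adj_comm c u, G.adj_comm c v]; exact htwin c hcu hcv
    simp only [Pi.sub_apply, Pi.single_eq_of_ne hcu, Pi.single_eq_of_ne hcv,
      Pi.smul_apply, smul_eq_mul, if_congr h1 rfl rfl]
    ring

/-- Let `G` be a Laplacian integral graph with twin vertices `u ≠ v`. Resetting
the weight of the edge `{u,v}` to `1/4` (i.e. `α = -3/4` if adjacent, `α = 1/4`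
otherwise) yields Laplacian perfect state transfer between `u` and `v` at time
`2π`, and periodicity `exp(-2πiL') e_p = e_p` at every other vertex `p`. -/
theorem integral_graph_quarter_edge_pst {n : ℕ} (G : SimpleGraph (Fin n))
    [DecidableRel G.Adj] (u v : Fin n) (huv : u ≠ v)
    (htwin : ∀ c : Fin n, c ≠ u → c ≠ v → (G.Adj u c ↔ G.Adj v c))
    (hint : ∀ μ ∈ spectrum ℝ (G.lapMatrix ℝ), ∃ k : ℤ, μ = (k : ℝ)) :
    let α : ℝ := if G.Adj u v then -(3 / 4) else 1 / 4
    let L' : Matrix (Fin n) (Fin n) ℂ :=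
      (G.lapMatrix ℝ).map Complex.ofReal + (α : ℂ) •
        vecMulVec (Pi.single u 1 - Pi.single v 1) (Pi.single u 1 - Pi.single v 1)
    NormedSpace.exp ((-(2 * Real.pi * I)) • L') *ᵥ Pi.single u 1 =
      Pi.single v 1 ∧
    ∀ p : Fin n, p ≠ u → p ≠ v →
      NormedSpace.exp ((-(2 * Real.pi * I)) • L') *ᵥ Pi.single p 1 =
        Pi.single p 1 := by
  intro α L'
  have hα : α = if G.Adj u v then -(3 / 4) else 1 / 4 := rfl
  set Lr : Matrix (Fin n) (Fin n) ℝ := G.lapMatrix ℝ with hLr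
  set Lc : Matrix (Fin n) (Fin n) ℂ := Lr.map Complex.ofReal with hLc
  set wc : Fin n → ℂ := Pi.single u 1 - Pi.single v 1 with hwc
  set Mc : Matrix (Fin n) (Fin n) ℂ := vecMulVec wc wc with hMc
  have hL'def : L' = Lc + (α : ℂ) • Mc := rfl
  -- symmetry of the Laplacian
  have hsymm : ∀ i j, Lr i j = Lr j i := by
    intro i j
    have h := G.isSymm_lapMatrix (R := ℝ)
    exact congrFun (congrFun h j) i
  -- Hermitian
  have hherm : Lc.IsHermitian := by
    have : Lcᴴ = Lc := by
      ext i j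
      simp only [hLc, Matrix.conjTranspose_apply, Matrix.map_apply, RCLike.star_def,
        Complex.conj_ofReal]
      exact congrArg _ (hsymm j i)
    exact this
  -- eigenvalue integrality for Lc
  have heig : ∀ i, ∃ k : ℤ, hherm.eigenvalues i = (k : ℝ) := by
    intro i
    have h1 : hherm.eigenvalues i ∈ spectrum ℝ Lc := hherm.eigenvalues_mem_spectrum_real i
    have h2 : spectrum ℝ Lc ⊆ spectrum ℝ Lr := by
      have h3 := AlgHom.spectrum_apply_subset ((Complex.ofRealAm.mapMatrix : Matrix (Fin n) (Fin n) ℝ →ₐ[ℝ] Matrix (Fin n) (Fin n) ℂ)) Lr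
      simpa [AlgHom.mapMatrix_apply, Complex.ofRealAm_coe, hLc] using h3
    exact hint _ (h2 h1)
  have hexpL : NormedSpace.exp ((-(2 * Real.pi * I)) • Lc) = 1 :=
    exp_smul_hermitian_int_eq_one Lc hherm heig
  -- eigenvector over ℂ
  set lam : ℝ := (G.degree u : ℝ) + (if G.Adj u v then 1 else 0) with hlam
  have hLw := twin_lap_eigen G u v huv htwin
  have hLwc : Lc *ᵥ wc = (lam : ℂ) • wc := by
    funext i
    have hreal : ∑ j, Lr i j * (Pi.single u 1 - Pi.single v 1 : Fin n → ℝ) j =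
        lam * (Pi.single u 1 - Pi.single v 1 : Fin n → ℝ) i := by
      simpa [Matrix.mulVec, dotProduct] using congrFun hLw i
    have hcast : ∀ j, wc j = (((Pi.single u 1 - Pi.single v 1 : Fin n → ℝ) j : ℝ) : ℂ) := by
      intro j
      simp [hwc, Pi.single_apply, apply_ite Complex.ofReal]
    simp only [Matrix.mulVec, dotProduct, hLc, Matrix.map_apply, Pi.smul_apply,
      smul_eq_mul, hcast]
    rw [← Complex.ofReal_mul, ← hreal]
    push_cast
    rfl
  -- commutation
  have hLcsymm : ∀ i j, Lc i j = Lc j i := by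
    intro i j; simp only [hLc, Matrix.map_apply]; exact congrArg _ (hsymm i j)
  have hcomm : Lc * Mc = Mc * Lc := by
    ext i j
    simp only [Matrix.mul_apply, hMc, vecMulVec_apply]
    have e1 : ∑ k, Lc i k * (wc k * wc j) = (Lc *ᵥ wc) i * wc j := by
      simp only [Matrix.mulVec, dotProduct, Finset.sum_mul]
      exact Finset.sum_congr rfl fun k _ => by ring
    have e2 : ∑ k, (wc i * wc k) * Lc k j = wc i * (Lc *ᵥ wc) j := by
      simp only [Matrix.mulVec, dotProduct, Finset.mul_sum]
      refine Finset.sum_congr rfl fun k _ => ?_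
      rw [hLcsymm k j]; ring
    rw [e1, e2, hLwc]
    simp only [Pi.smul_apply, smul_eq_mul]
    ring
  set c2 : ℂ := (-(2 * Real.pi * I)) * (α : ℂ) with hc2
  -- exp splits
  have hL'smul : (-(2 * Real.pi * I)) • L' = (-(2 * Real.pi * I)) • Lc + c2 • Mc := by
    rw [hL'def, smul_add, smul_smul, hc2]
  have hcomm2 : Commute ((-(2 * Real.pi * I)) • Lc) (c2 • Mc) := by
    show ((-(2 * Real.pi * I)) • Lc) * (c2 • Mc) = (c2 • Mc) * ((-(2 * Real.pi * I)) • Lc)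
    rw [smul_mul_assoc, mul_smul_comm, smul_mul_assoc, mul_smul_comm, hcomm, smul_comm]
  have hsplit : NormedSpace.exp ((-(2 * Real.pi * I)) • L') =
      NormedSpace.exp (c2 • Mc) := by
    rw [hL'smul, Matrix.exp_add_of_commute _ _ hcomm2, hexpL, one_mul]
  -- Mc action
  have hMv : ∀ x : Fin n → ℂ, Mc *ᵥ x = (x u - x v) • wc := by
    intro x; funext i
    simp only [hMc, Matrix.mulVec, dotProduct, vecMulVec_apply, Pi.smul_apply,
      smul_eq_mul]
    have e1 : ∑ j, wc i * wc j * x j = wc i * ∑ j, wc j * x j := by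
      rw [Finset.mul_sum]
      exact Finset.sum_congr rfl fun k _ => by ring
    have e2 : ∑ j, wc j * x j = x u - x v := by
      simp only [hwc, Pi.sub_apply, Pi.single_apply, sub_mul, one_mul, ite_mul, zero_mul,
        Finset.sum_sub_distrib]
      rw [Finset.sum_ite_eq' Finset.univ u x, Finset.sum_ite_eq' Finset.univ v x]
      simp
    rw [e1, e2]
    ring
  -- the exp(-2 pi i * 2 c2 /2) value
  have hval : Complex.exp (2 * c2) = -1 := by
    by_cases h : G.Adj u v
    · have hαval : (α : ℝ) = -(3 / 4) := by rw [hα, if_pos h]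
      have : 2 * c2 = ↑Real.pi * I + 2 * ↑Real.pi * I := by
        rw [hc2, hαval]; push_cast; ring
      rw [this, Complex.exp_add, Complex.exp_pi_mul_I, Complex.exp_two_pi_mul_I]
      norm_num
    · have hαval : (α : ℝ) = 1 / 4 := by rw [hα, if_neg h]
      have : 2 * c2 = -(↑Real.pi * I) := by
        rw [hc2, hαval]; push_cast; ring
      rw [this, Complex.exp_neg, Complex.exp_pi_mul_I]
      norm_num
  -- eigen equations for c2 • Mc
  have hwcuv : wc u - wc v = 2 := by
    simp [hwc, Pi.single_eq_same, Pi.single_eq_of_ne huv, Pi.single_eq_of_ne (Ne.symm huv)]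
    ring
  have hwc_eig : (c2 • Mc) *ᵥ wc = (2 * c2) • wc := by
    rw [Matrix.smul_mulVec, hMv, hwcuv, smul_smul, mul_comm]
  have hs_eig : (c2 • Mc) *ᵥ ((Pi.single u 1 : Fin n → ℂ) + Pi.single v 1) =
      (0 : ℂ) • ((Pi.single u 1 : Fin n → ℂ) + Pi.single v 1) := by
    rw [Matrix.smul_mulVec, hMv]
    simp [Pi.single_eq_same, Pi.single_eq_of_ne huv, Pi.single_eq_of_ne (Ne.symm huv)]
  constructor
  · have hdecomp : (Pi.single u 1 : Fin n → ℂ) =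
        (2⁻¹ : ℂ) • (((Pi.single u 1 : Fin n → ℂ) + Pi.single v 1) + wc) := by
      funext i
      simp only [hwc, Pi.smul_apply, Pi.add_apply, Pi.sub_apply, smul_eq_mul]
      ring
    rw [hsplit]
    conv_lhs => rw [hdecomp]
    rw [Matrix.mulVec_smul, Matrix.mulVec_add, exp_mulVec_eigen _ _ _ hs_eig,
      exp_mulVec_eigen _ _ _ hwc_eig, Complex.exp_zero, one_smul, hval]
    funext i
    simp only [hwc, Pi.smul_apply, Pi.add_apply, Pi.sub_apply, Pi.neg_apply, smul_eq_mul,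
      neg_smul, one_smul]
    ring
  · intro p hpu hpv
    have hp_eig : (c2 • Mc) *ᵥ (Pi.single p 1 : Fin n → ℂ) =
        (0 : ℂ) • (Pi.single p 1 : Fin n → ℂ) := by
      rw [Matrix.smul_mulVec, hMv]
      simp [Pi.single_eq_of_ne (Ne.symm hpu), Pi.single_eq_of_ne (Ne.symm hpv)]
    rw [hsplit, exp_mulVec_eigen _ _ _ hp_eig, Complex.exp_zero, one_smul]
end
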